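/- Let ℓ,m ≥ 1, λ = ((ℓ+1)^m), and let k be an integer with 0 ≤ k ≤ ℓ; set ν^{(k)} = (ℓ^{m−1},k) = (ℓ,…,ℓ,k), a partition contained in λ. Then the map p ↦ λ ∖ p is a bijection from the set L((1,ℓ+1),(m,k+1)) of lattice paths from (1,ℓ+1) to (m,k+1) onto the set E_λ(ν^{(k)}) of excited diagrams of ν^{(k)} in λ (every such lattice path is automatically contained in the Young diagram λ). -/

import Mathlib

open scoped BigOperators

/-- A cell of the plane `ℤ²`. -/
abbrev Cell : Type := ℤ × ℤ

/-- The partial order `⊴` on `ℤ²`: `(a,b) ⊴ (a',b')` iff `a ≥ a'` and `b ≥ b'`. -/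
def cellLE (u v : Cell) : Prop := v.1 ≤ u.1 ∧ v.2 ≤ u.2

/-- The cylinder `C_ω = ℤ²/ℤω`. -/
abbrev Cyl (ω : Cell) : Type := Cell ⧸ AddSubgroup.zmultiples ω

/-- The natural projection `π : ℤ² → C_ω`. -/
def pr (ω : Cell) : Cell → Cyl ω := QuotientAddGroup.mk

/-- The induced relation `⊴` on the cylinder: `x ⊴ y` iff some lifts satisfy `x̃ ⊴ ỹ`. -/
def cylLE (ω : Cell) (x y : Cyl ω) : Prop :=
  ∃ u v : Cell, pr ω u = x ∧ pr ω v = y ∧ cellLE u v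

/-- The hook of `x` in a diagram `Θ ⊆ ℤ²`. -/
def hookSet (Θ : Set Cell) (x : Cell) : Set Cell :=
  Θ ∩ ({y | ∃ k : ℤ, 0 ≤ k ∧ y = x + (k, 0)} ∪ {y | ∃ k : ℤ, 1 ≤ k ∧ y = x + (0, k)})

/-- The hook length of `x` in `Θ`. -/
noncomputable def hookLen (Θ : Set Cell) (x : Cell) : ℕ := (hookSet Θ x).ncard

/-- The hook length of a cell of the cylinder, computed via a lift. -/
noncomputable def cylHook (ω : Cell) (Θ : Set Cell) (x : Cyl ω) : ℕ :=
  hookLen Θ (Quotient.out x)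

/-- The `ℤω`-orbit of a cell. -/
def zline (ω y : Cell) : Set Cell := {z | ∃ k : ℤ, z = y + k • ω}

/-- `S + ℤω`. -/
def perClosure (ω : Cell) (S : Set Cell) : Set Cell := {z | ∃ y ∈ S, ∃ k : ℤ, z = y + k • ω}

/-- Translation of a set of cells by `u`. -/
def shiftSet (u : Cell) (S : Set Cell) : Set Cell := (· + u) '' S

/-- The semi-infinite diagram `λ̄ = {(a,b) : 1 ≤ a ≤ m, b ≤ λ_a}`. -/
def lowerDiag (m : ℤ) (lam : ℤ → ℤ) : Set Cell := {p | 1 ≤ p.1 ∧ p.1 ≤ m ∧ p.2 ≤ lam p.1}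

/-- The Young diagram `{(a,b) : 1 ≤ a ≤ m, 1 ≤ b ≤ λ_a}`. -/
def youngDiag (m : ℤ) (lam : ℤ → ℤ) : Set Cell :=
  {p | 1 ≤ p.1 ∧ p.1 ≤ m ∧ 1 ≤ p.2 ∧ p.2 ≤ lam p.1}

/-- The skew diagram `λ/μ = {(a,b) : 1 ≤ a ≤ m, μ_a < b ≤ λ_a}`. -/
def skewDiag (m : ℤ) (lam mu : ℤ → ℤ) : Set Cell :=
  {p | 1 ≤ p.1 ∧ p.1 ≤ m ∧ mu p.1 < p.2 ∧ p.2 ≤ lam p.1}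

/-- The periodic diagram `λ̃ = λ̄ + ℤ(m,−ℓ)`. -/
def perDiag (m l : ℤ) (lam : ℤ → ℤ) : Set Cell := perClosure (m, -l) (lowerDiag m lam)

/-- The cylindric diagram `λ̂ = π(λ̃)`. -/
def cylDiag (m l : ℤ) (lam : ℤ → ℤ) : Set (Cyl (m, -l)) := pr (m, -l) '' perDiag m l lam

/-- `λ ∈ P_{m,ℓ}`: an `ℓ`-restricted generalized partition of length `m`
(only the values `λ_1, …, λ_m` are relevant). -/
def IsRestricted (m l : ℤ) (lam : ℤ → ℤ) : Prop :=
  (∀ a : ℤ, 1 ≤ a → a < m → lam (a + 1) ≤ lam a) ∧ lam 1 - lam m ≤ l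

/-- `y` is a `D`-active cell (with ambient diagram `Θ`). -/
def IsActive (Θ D : Set Cell) (y : Cell) : Prop :=
  y ∈ D ∧ y + (1, 0) ∈ Θ \ D ∧ y + (0, 1) ∈ Θ \ D ∧ y + (1, 1) ∈ Θ \ D

/-- One elementary excitation inside `Θ`. -/
def exciteStep (Θ D E : Set Cell) : Prop :=
  ∃ y, IsActive Θ D y ∧ E = (D \ {y}) ∪ {y + (1, 1)}

/-- The excited diagrams of `M` in `Θ`. -/
def ExcitedSet (Θ M : Set Cell) : Set (Set Cell) :=
  {D | Relation.ReflTransGen (exciteStep Θ) M D}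

/-- One periodic elementary excitation inside `Θ`. -/
def pExciteStep (ω : Cell) (Θ D E : Set Cell) : Prop :=
  ∃ y, IsActive Θ D y ∧ E = (D \ zline ω y) ∪ zline ω (y + (1, 1))

/-- The periodic excited diagrams of `M` in `Θ`. -/
def PExcitedSet (ω : Cell) (Θ M : Set Cell) : Set (Set Cell) :=
  {D | Relation.ReflTransGen (pExciteStep ω Θ) M D}

/-- The cylindric excited diagrams: images under `π` of the periodic excited diagrams. -/
def CylExcitedSet (ω : Cell) (Θ M : Set Cell) : Set (Set (Cyl ω)) :=
  (fun D => pr ω '' D) '' PExcitedSet ω Θ M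

/-- A linear extension of `S` (with respect to a relation `R`): a bijection
`ε : S → {1,…,n}` with `ε x < ε y` whenever `R x y` and `x ≠ y`. -/
def IsLinExt {α : Type} (R : α → α → Prop) (S : Set α) (n : ℕ) (ε : S → Fin n) : Prop :=
  Function.Bijective ε ∧ ∀ x y : S, R (x : α) (y : α) → (x : α) ≠ (y : α) → ε x < ε y

/-- The number of linear extensions of `S`. -/
noncomputable def linExtCount {α : Type} (R : α → α → Prop) (S : Set α) (n : ℕ) : ℕ :=
  Nat.card {ε : S → Fin n // IsLinExt R S n ε}

/-- A reverse standard tableau on a (skew) diagram `S` of `n` cells. -/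
def IsRST (S : Set Cell) (n : ℕ) (ε : S → Fin n) : Prop :=
  Function.Bijective ε ∧
    (∀ x y : S, (y : Cell) = (x : Cell) + (0, 1) → ε y < ε x) ∧
    (∀ x y : S, (y : Cell) = (x : Cell) + (1, 0) → ε y < ε x)

/-- An `ℓ`-restricted reverse standard tableau on a skew diagram of length `m`. -/
def IsRSTl (m l : ℤ) (S : Set Cell) (n : ℕ) (ε : S → Fin n) : Prop :=
  IsRST S n ε ∧
    ∀ x y : S, (x : Cell).1 = 1 → (y : Cell) = (m, (x : Cell).2 - l) → ε x < ε y

/-- One lattice step: right by `(1,0)` or down by `(0,−1)`. -/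
def stepRel (a b : Cell) : Prop := b - a = (1, 0) ∨ b - a = (0, -1)

/-- `p` is (the list of cells of) a lattice path from `u` to `v`. -/
def IsLatticePathList (u v : Cell) (p : List Cell) : Prop :=
  p.head? = some u ∧ p.getLast? = some v ∧ p.Chain' stepRel

/-- `L(u,v)`: lattice paths from `u` to `v`, identified with their underlying sets of cells. -/
def LPath (u v : Cell) : Set (Set Cell) :=
  {S | ∃ p : List Cell, IsLatticePathList u v p ∧ S = {x | x ∈ p}}

/-- `L_Θ(u,v)`: lattice paths from `u` to `v` contained in `Θ`. -/
def LPathIn (Θ : Set Cell) (u v : Cell) : Set (Set Cell) := {S | S ∈ LPath u v ∧ S ⊆ Θ}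

/-- One lattice step on the cylinder. -/
def cylStep (ω : Cell) (x y : Cyl ω) : Prop :=
  ∃ u v : Cell, pr ω u = x ∧ pr ω v = y ∧ stepRel u v

/-- `S` is a non-intersecting loop of length `n` in the cylinder. -/
def IsNILoop (ω : Cell) (n : ℕ) (S : Set (Cyl ω)) : Prop :=
  ∃ u : ZMod n → Cyl ω, Function.Injective u ∧ S = Set.range u ∧
    ∀ i : ZMod n, cylStep ω (u i) (u (i + 1))

/-- `h^{s,t}_{m,ℓ}(x) = ℓ+m−a−b+dt+s+1` where `x = (a, b−dℓ)` with `2 ≤ b ≤ ℓ+1`, `d ≥ 0`. -/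
def hst (m l s t : ℤ) (x : Cell) : ℤ :=
  l + m - x.1 - x.2 + ((l + 1 - x.2) / l) * (t - l) + s + 1

/-- The hook lengths `h_i` of the bar case: `h_{ℓt+j} = (ℓ+1)t+j = i + (i−1)/ℓ`. -/
def hbar (l i : ℤ) : ℤ := i + (i - 1) / l

namespace EDPC

/-- Path function: `g c` is the row of the path cell on diagonal `c`. -/
def Ok (d₀ d₁ r₀ r₁ : ℤ) (g : ℤ → ℤ) : Prop :=
  g d₀ = r₀ ∧ g d₁ = r₁ ∧ ∀ c, d₀ ≤ c → c < d₁ → g (c+1) = g c ∨ g (c+1) = g c + 1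

def cells (d₀ d₁ : ℤ) (g : ℤ → ℤ) : Set Cell :=
  {x | d₀ ≤ x.1 - x.2 ∧ x.1 - x.2 ≤ d₁ ∧ x.1 = g (x.1 - x.2)}

lemma mem_cells {d₀ d₁ : ℤ} {g : ℤ → ℤ} {x : Cell} :
    x ∈ cells d₀ d₁ g ↔ d₀ ≤ x.1 - x.2 ∧ x.1 - x.2 ≤ d₁ ∧ x.1 = g (x.1 - x.2) := Iff.rfl

lemma cell_mem_cells {d₀ d₁ : ℤ} {g : ℤ → ℤ} {c : ℤ} (h1 : d₀ ≤ c) (h2 : c ≤ d₁) :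
    ((g c, g c - c) : Cell) ∈ cells d₀ d₁ g := by
  simp only [mem_cells]
  constructor
  · omega
  constructor
  · omega
  · norm_num

/-- Forward: a lattice path list gives a path function. -/
lemma forward : ∀ p : List Cell, p.Chain' stepRel → ∀ u v : Cell, p.head? = some u →
    p.getLast? = some v →
    u.1 - u.2 ≤ v.1 - v.2 ∧ ∃ g, Ok (u.1 - u.2) (v.1 - v.2) u.1 v.1 g ∧
      {x | x ∈ p} = cells (u.1 - u.2) (v.1 - v.2) g := by
  intro p
  induction p with
  | nil => intro _ u v h; simp at h
  | cons a t ih =>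
    intro hch u v hh hlast
    obtain rfl : a = u := by simpa using hh
    match t, hch, hlast with
    | [], _, hlast =>
      obtain rfl : a = v := by simpa using hlast
      refine ⟨le_refl _, fun _ => a.1, ⟨rfl, rfl, fun c h1 h2 => by omega⟩, ?_⟩
      ext z
      simp only [List.mem_cons, List.not_mem_nil, or_false, Set.mem_setOf_eq, mem_cells]
      constructor
      · rintro rfl; exact ⟨le_refl _, le_refl _, rfl⟩
      · rintro ⟨h1, h2, h3⟩
        have hz2 : z.2 = a.2 := by omega
        exact Prod.ext h3 hz2
    | y :: t', hch, hlast =>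
      have hstep : stepRel a y := hch.rel_head
      have hch' : (y :: t').Chain' stepRel := hch.tail
      have hlast' : (y :: t').getLast? = some v := by
        rw [← hlast]; rfl
      obtain ⟨hle, g, hOk, hset⟩ := ih hch' y v rfl hlast'
      have hd : y.1 - y.2 = a.1 - a.2 + 1 := by
        rcases hstep with h | h <;>
        · have h1 := congrArg Prod.fst h
          have h2 := congrArg Prod.snd h
          simp at h1 h2; omega
      have hy1 : y.1 = a.1 ∨ y.1 = a.1 + 1 := by
        rcases hstep with h | h
        · have h1 := congrArg Prod.fst h
          simp at h1; right; omega
        · have h1 := congrArg Prod.fst h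
          simp at h1; left; omega
      obtain ⟨hg0, hg1, hgs⟩ := hOk
      rw [hd] at hle hg0 hgs hset
      have hled : a.1 - a.2 + 1 ≤ v.1 - v.2 := hle
      refine ⟨by omega, fun c => if c = a.1 - a.2 then a.1 else g c, ⟨by simp, ?_, ?_⟩, ?_⟩
      · have hne : v.1 - v.2 ≠ a.1 - a.2 := by omega
        simp only [hne, if_false]
        exact hg1
      · intro c h1 h2
        rcases eq_or_lt_of_le h1 with hc | hc
        · have hne : c + 1 ≠ a.1 - a.2 := by omega
          have hgy : g (c + 1) = y.1 := by rw [← hc]; exact hg0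
          simp only
          rw [if_neg hne, if_pos hc.symm, hgy]
          exact hy1
        · have hne : c + 1 ≠ a.1 - a.2 := by omega
          have hne2 : c ≠ a.1 - a.2 := by omega
          simp only [hne, hne2, if_false]
          exact hgs c (by omega) h2
      · ext z
        have hz : (z ∈ (y :: t')) ↔ z ∈ cells (a.1 - a.2 + 1) (v.1 - v.2) g := by
          rw [show (z ∈ (y :: t')) = (z ∈ {w : Cell | w ∈ y :: t'}) from rfl, hset]
        simp only [mem_cells, List.mem_cons] at hz
        simp only [Set.mem_setOf_eq, List.mem_cons, mem_cells]
        rw [hz]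
        constructor
        · rintro (rfl | ⟨h1, h2, h3⟩)
          · exact ⟨by omega, by omega, by simp⟩
          · refine ⟨by omega, h2, ?_⟩
            have hne : z.1 - z.2 ≠ a.1 - a.2 := by omega
            simp only [hne, if_false]; exact h3
        · rintro ⟨h1, h2, h3⟩
          by_cases hzc : z.1 - z.2 = a.1 - a.2
          · left
            simp only [hzc, if_pos] at h3
            have hz2 : z.2 = a.2 := by omega
            exact Prod.ext h3 hz2
          · right
            refine ⟨by omega, h2, ?_⟩
            simpa only [hzc, if_false] using h3

/-- Backward: a path function gives a lattice path. -/
lemma backward {d₀ d₁ r₀ r₁ : ℤ} {g : ℤ → ℤ} (hO : Ok d₀ d₁ r₀ r₁ g) (hd : d₀ ≤ d₁) :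
    cells d₀ d₁ g ∈ LPath (r₀, r₀ - d₀) (r₁, r₁ - d₁) := by
  obtain ⟨hg0, hg1, hgs⟩ := hO
  set n : ℕ := (d₁ - d₀).toNat with hn
  have hdn : d₀ + (n : ℤ) = d₁ := by omega
  set f : ℕ → Cell := fun i => (g (d₀ + i), g (d₀ + i) - (d₀ + i)) with hf
  refine ⟨(List.range (n+1)).map f, ⟨?_, ?_, ?_⟩, ?_⟩
  · rw [List.head?_map, List.range_succ_eq_map]
    simp [hf, hg0]
  · rw [List.getLast?_map, List.range_succ, List.getLast?_append]
    simp [hf, hdn, hg1]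
  · unfold List.Chain'; rw [List.isChain_map, List.isChain_range_succ]
    intro i hi
    have h1 : d₀ ≤ d₀ + (i:ℤ) := by omega
    have h2 : d₀ + (i:ℤ) < d₁ := by omega
    have hstep := hgs (d₀ + i) h1 h2
    have hcast : (d₀ + (↑i + 1)) = (d₀ + ↑i) + 1 := by push_cast; ring
    simp only [hf, stepRel, hcast, Nat.cast_succ]
    rcases hstep with h | h
    · right
      rw [h]
      simp [Prod.ext_iff]
    · left
      rw [h]
      simp [Prod.ext_iff]
  · ext z
    simp only [Set.mem_setOf_eq, List.mem_map, List.mem_range, mem_cells]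
    constructor
    · rintro ⟨h1, h2, h3⟩
      refine ⟨(z.1 - z.2 - d₀).toNat, by omega, ?_⟩
      have : d₀ + ((z.1 - z.2 - d₀).toNat : ℤ) = z.1 - z.2 := by omega
      simp only [hf, this]
      exact Prod.ext h3.symm (by omega)
    · rintro ⟨i, hi, rfl⟩
      simp only [hf]
      refine ⟨by push_cast; omega, by push_cast; omega, by push_cast; ring_nf⟩

lemma mono_aux {d₀ d₁ r₀ r₁ : ℤ} {g : ℤ → ℤ} (hO : Ok d₀ d₁ r₀ r₁ g) :
    ∀ n : ℕ, ∀ c : ℤ, d₀ ≤ c → c + n ≤ d₁ → g c ≤ g (c + n) ∧ g (c + n) ≤ g c + n := by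
  intro n
  induction n with
  | zero => intro c h1 h2; simp
  | succ n ihn =>
    intro c h1 h2
    have h2' : c + (n:ℤ) ≤ d₁ := by push_cast at h2 ⊢; omega
    obtain ⟨ha, hb⟩ := ihn c h1 h2'
    have hstep := hO.2.2 (c + n) (by omega) (by push_cast at h2; omega)
    have hcast : c + ((n:ℤ) + 1) = (c + n) + 1 := by ring
    push_cast
    rw [hcast]
    rcases hstep with h | h <;> rw [h] <;> omega

lemma bounds {d₀ d₁ r₀ r₁ : ℤ} {g : ℤ → ℤ} (hO : Ok d₀ d₁ r₀ r₁ g) {c : ℤ}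
    (h1 : d₀ ≤ c) (h2 : c ≤ d₁) :
    r₀ ≤ g c ∧ g c ≤ r₀ + (c - d₀) ∧ g c ≤ r₁ ∧ r₁ - (d₁ - c) ≤ g c := by
  have e1 : d₀ + ((c - d₀).toNat : ℤ) = c := by omega
  have e2 : c + ((d₁ - c).toNat : ℤ) = d₁ := by omega
  have b1 := mono_aux hO (c - d₀).toNat d₀ (le_refl _) (by omega)
  have b2 := mono_aux hO (d₁ - c).toNat c h1 (by omega)
  rw [e1] at b1
  rw [e2] at b2
  rw [hO.1] at b1
  rw [hO.2.1] at b2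
  refine ⟨b1.1, by omega, b2.1, by omega⟩

section Rect
variable {L M K : ℤ}

/-- The ambient rectangle. -/
def lam (L M : ℤ) : Set Cell := youngDiag M (fun _ => L + 1)

lemma cells_subset (hL : 1 ≤ L) (hK0 : 0 ≤ K) {g : ℤ → ℤ}
    (hO : Ok (-L) (M - K - 1) 1 M g) : cells (-L) (M - K - 1) g ⊆ lam L M := by
  rintro ⟨a, b⟩ ⟨h1, h2, h3⟩
  simp only at h1 h2 h3
  obtain ⟨b1, b2, b3, b4⟩ := bounds hO h1 h2
  rw [← h3] at b1 b2 b3 b4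
  refine ⟨by simpa using b1, by simpa using b3, by simp; omega, by simp; omega⟩

/-- The extreme path function. -/
def g0 (L M : ℤ) : ℤ → ℤ := fun c => min M (c + L + 1)

lemma g0_Ok (hL : 1 ≤ L) (hM : 1 ≤ M) (hK0 : 0 ≤ K) (hKL : K ≤ L) :
    Ok (-L) (M - K - 1) 1 M (g0 L M) := by
  refine ⟨by simp [g0]; omega, by simp [g0]; omega, fun c h1 h2 => by simp [g0]; omega⟩

lemma nu_eq (hL : 1 ≤ L) (hM : 1 ≤ M) (hK0 : 0 ≤ K) (hKL : K ≤ L) :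
    youngDiag M (fun a => if a = M then K else L) =
      lam L M \ cells (-L) (M - K - 1) (g0 L M) := by
  ext ⟨a, b⟩
  simp only [youngDiag, lam, Set.mem_setOf_eq, Set.mem_diff, mem_cells, g0]
  by_cases ha : a = M
  · subst ha
    simp only [eq_self_iff_true, if_true]
    constructor
    · rintro ⟨h1, h2, h3, h4⟩
      refine ⟨⟨h1, h2, h3, by omega⟩, ?_⟩
      rintro ⟨j1, j2, j3⟩
      omega
    · rintro ⟨⟨h1, h2, h3, h4⟩, h5⟩
      refine ⟨h1, h2, h3, ?_⟩
      by_contra hb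
      exact h5 ⟨by omega, by omega, by omega⟩
  · simp only [if_neg ha]
    constructor
    · rintro ⟨h1, h2, h3, h4⟩
      refine ⟨⟨h1, by omega, h3, by omega⟩, ?_⟩
      rintro ⟨j1, j2, j3⟩
      omega
    · rintro ⟨⟨h1, h2, h3, h4⟩, h5⟩
      refine ⟨h1, h2, h3, ?_⟩
      by_contra hb
      exact h5 ⟨by omega, by omega, by omega⟩

lemma flip (hL : 1 ≤ L) (hK0 : 0 ≤ K) {g : ℤ → ℤ} {c : ℤ}
    (hO : Ok (-L) (M - K - 1) 1 M g) (hc1 : -L < c) (hc2 : c < M - K - 1)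
    (hflat : g (c - 1) = g c) (hrise : g (c + 1) = g c + 1) :
    Ok (-L) (M - K - 1) 1 M (Function.update g c (g c + 1)) ∧
    IsActive (lam L M) (lam L M \ cells (-L) (M - K - 1) (Function.update g c (g c + 1)))
      (g c, g c - c) ∧
    lam L M \ cells (-L) (M - K - 1) g =
      ((lam L M \ cells (-L) (M - K - 1) (Function.update g c (g c + 1))) \ {(g c, g c - c)}) ∪
        {(g c, g c - c) + (1, 1)} := by
  set g' := Function.update g c (g c + 1) with hg'
  have hgc : g' c = g c + 1 := Function.update_self c (g c + 1) g
  have hgne : ∀ c' : ℤ, c' ≠ c → g' c' = g c' := fun c' h => Function.update_of_ne h _ g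
  have hO' : Ok (-L) (M - K - 1) 1 M g' := by
    refine ⟨?_, ?_, ?_⟩
    · rw [hgne _ (by omega)]; exact hO.1
    · rw [hgne _ (by omega)]; exact hO.2.1
    · intro c' h1 h2
      by_cases h : c' = c - 1
      · subst h
        rw [show c - 1 + 1 = c by ring, hgc, hgne _ (by omega), hflat]
        right; rfl
      · by_cases h' : c' = c
        · subst h'
          rw [hgne _ (by omega), hrise, hgc]
          left; rfl
        · rw [hgne _ (by omega), hgne _ h']
          exact hO.2.2 c' h1 h2
  refine ⟨hO', ?_⟩
  have hS := cells_subset hL hK0 hO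
  have hS' := cells_subset hL hK0 hO'
  set y : Cell := (g c, g c - c) with hy
  have hy1 : y.1 = g c := rfl
  have hy2 : y.2 = g c - c := rfl
  have hy11_1 : (y + (1, 1)).1 = g c + 1 := rfl
  have hy11_2 : (y + (1, 1)).2 = g c - c + 1 := rfl
  have hyS : y ∈ cells (-L) (M - K - 1) g := ⟨by omega, by omega, by rw [hy1, hy2, show g c - (g c - c) = c by ring]⟩
  have hyS' : y ∉ cells (-L) (M - K - 1) g' := by
    rintro ⟨-, -, h3⟩
    rw [hy1, hy2, show g c - (g c - c) = c by ring, hgc] at h3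
    omega
  have h11 : y + (1, 1) ∈ cells (-L) (M - K - 1) g' := by
    refine ⟨by omega, by omega, ?_⟩
    rw [hy11_1, hy11_2, show g c + 1 - (g c - c + 1) = c by ring, hgc]
  have h11g : y + (1, 1) ∉ cells (-L) (M - K - 1) g := by
    rintro ⟨-, -, h3⟩
    rw [hy11_1, hy11_2, show g c + 1 - (g c - c + 1) = c by ring] at h3
    omega
  have p10_1 : (y + (1, 0)).1 = g c + 1 := rfl
  have p10_2 : (y + (1, 0)).2 = g c - c := by
    show y.2 + 0 = g c - c
    rw [hy2]; ring
  have p01_1 : (y + (0, 1)).1 = g c := by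
    show y.1 + 0 = g c
    rw [hy1]; ring
  have p01_2 : (y + (0, 1)).2 = g c - c + 1 := rfl
  have h10 : y + (1, 0) ∈ cells (-L) (M - K - 1) g' := by
    have e : (y + (1, 0)).1 - (y + (1, 0)).2 = c + 1 := by rw [p10_1, p10_2]; ring
    refine ⟨by omega, by omega, ?_⟩
    rw [e, hgne _ (by omega), hrise, p10_1]
  have h01 : y + (0, 1) ∈ cells (-L) (M - K - 1) g' := by
    have e : (y + (0, 1)).1 - (y + (0, 1)).2 = c - 1 := by rw [p01_1, p01_2]; ring
    refine ⟨by omega, by omega, ?_⟩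
    rw [e, hgne _ (by omega), hflat, p01_1]
  have hyney : y + (1, 1) ≠ y := by
    intro h
    have := congrArg Prod.fst h
    rw [hy11_1, hy1] at this
    omega
  have hym : ∀ x ∈ cells (-L) (M - K - 1) g', x ∈ lam L M \ (lam L M \ cells (-L) (M - K - 1) g') :=
    fun x hx => ⟨hS' hx, fun hc => hc.2 hx⟩
  refine ⟨⟨⟨hS hyS, hyS'⟩, hym _ h10, hym _ h01, hym _ h11⟩, ?_⟩
  have hA : ∀ x : Cell, x ∈ cells (-L) (M - K - 1) g ↔
      (x ∈ cells (-L) (M - K - 1) g' ∧ x ≠ y + (1, 1)) ∨ x = y := by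
    intro x
    constructor
    · rintro ⟨h1, h2, h3⟩
      by_cases hx : x.1 - x.2 = c
      · right
        rw [hx] at h3
        refine Prod.ext (by rw [h3, hy1]) (by rw [hy2]; omega)
      · left
        refine ⟨⟨h1, h2, by rw [hgne _ hx]; exact h3⟩, ?_⟩
        intro he
        apply hx
        rw [he, hy11_1, hy11_2]; ring
    · rintro (⟨⟨h1, h2, h3⟩, hne⟩ | rfl)
      · by_cases hx : x.1 - x.2 = c
        · exfalso
          apply hne
          rw [hx, hgc] at h3
          refine Prod.ext (by rw [h3, hy11_1]) (by rw [hy11_2]; omega)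
        · exact ⟨h1, h2, by rw [← hgne _ hx]; exact h3⟩
      · exact hyS
  ext x
  simp only [Set.mem_union, Set.mem_diff, Set.mem_singleton_iff, hA x]
  have hYl : y ∈ lam L M := hS hyS
  have hY11l : y + (1, 1) ∈ lam L M := hS' h11
  by_cases hxe : x = y + (1, 1)
  · subst hxe
    have : y + (1, 1) ∉ cells (-L) (M - K - 1) g' → False := fun h => h h11
    tauto
  · by_cases hxy : x = y
    · subst hxy
      have h1 : y ∉ cells (-L) (M - K - 1) g' := hyS'
      tauto
    · tauto

lemma flip_step (hL : 1 ≤ L) (hK0 : 0 ≤ K) {g : ℤ → ℤ} {c : ℤ}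
    (hO : Ok (-L) (M - K - 1) 1 M g) (hc1 : -L < c) (hc2 : c < M - K - 1)
    (hflat : g (c - 1) = g c) (hrise : g (c + 1) = g c + 1) :
    exciteStep (lam L M) (lam L M \ cells (-L) (M - K - 1) (Function.update g c (g c + 1)))
      (lam L M \ cells (-L) (M - K - 1) g) := by
  obtain ⟨-, h2, h3⟩ := flip hL hK0 hO hc1 hc2 hflat hrise
  exact ⟨_, h2, h3⟩

lemma exc_char (hL : 1 ≤ L) (hM : 1 ≤ M) (hK0 : 0 ≤ K) (hKL : K ≤ L) {D : Set Cell}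
    (hD : D ∈ ExcitedSet (lam L M) (youngDiag M (fun a => if a = M then K else L))) :
    ∃ g, Ok (-L) (M - K - 1) 1 M g ∧ D = lam L M \ cells (-L) (M - K - 1) g := by
  induction hD with
  | refl => exact ⟨g0 L M, g0_Ok hL hM hK0 hKL, nu_eq hL hM hK0 hKL⟩
  | tail hab hstep ih =>
    obtain ⟨g, hOk, rfl⟩ := ih
    obtain ⟨y, ⟨⟨hyl, hyn⟩, h10, h01, h11⟩, hE⟩ := hstep
    have hmem : ∀ x : Cell, x ∈ lam L M \ (lam L M \ cells (-L) (M - K - 1) g) →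
        x ∈ cells (-L) (M - K - 1) g := by
      rintro x ⟨hl, hn⟩
      by_contra hcon
      exact hn ⟨hl, hcon⟩
    have h10' := hmem _ h10
    have h01' := hmem _ h01
    have h11' := hmem _ h11
    set c : ℤ := y.1 - y.2 with hc
    have e11_1 : (y + (1, 1)).1 = y.1 + 1 := rfl
    have e11_2 : (y + (1, 1)).2 = y.2 + 1 := rfl
    have e10_1 : (y + (1, 0)).1 = y.1 + 1 := rfl
    have e10_2 : (y + (1, 0)).2 = y.2 + 0 := rfl
    have e01_1 : (y + (0, 1)).1 = y.1 + 0 := rfl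
    have e01_2 : (y + (0, 1)).2 = y.2 + 1 := rfl
    obtain ⟨j1, j2, j3⟩ := h11'
    rw [e11_1, e11_2] at j1 j2 j3
    have j3 : g c = y.1 + 1 := by rw [show c = y.1 + 1 - (y.2 + 1) by omega]; exact j3.symm
    obtain ⟨k1, k2, k3⟩ := h01'
    rw [e01_1, e01_2] at k1 k2 k3
    have k3 : g (c - 1) = y.1 := by rw [show c - 1 = y.1 + 0 - (y.2 + 1) by omega]; rw [← k3]; ring
    obtain ⟨m1, m2, m3⟩ := h10'
    rw [e10_1, e10_2] at m1 m2 m3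
    have m3 : g (c + 1) = y.1 + 1 := by rw [show c + 1 = y.1 + 1 - (y.2 + 0) by omega]; exact m3.symm
    set glow := Function.update g c y.1 with hglow
    have hlc : glow c = y.1 := Function.update_self c y.1 g
    have hlne : ∀ c' : ℤ, c' ≠ c → glow c' = g c' := fun c' h => Function.update_of_ne h _ g
    have hOlow : Ok (-L) (M - K - 1) 1 M glow := by
      refine ⟨by rw [hlne _ (by omega)]; exact hOk.1, by rw [hlne _ (by omega)]; exact hOk.2.1, ?_⟩
      intro c' hh1 hh2
      by_cases h : c' = c - 1
      · subst h
        rw [show c - 1 + 1 = c by ring, hlc, hlne _ (by omega), k3]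
        left; rfl
      · by_cases h' : c' = c
        · subst h'
          rw [hlne _ (by omega), m3, hlc]
          right; rfl
        · rw [hlne _ (by omega), hlne _ h']
          exact hOk.2.2 c' hh1 hh2
    have hflat : glow (c - 1) = glow c := by rw [hlne _ (by omega), k3, hlc]
    have hrise : glow (c + 1) = glow c + 1 := by rw [hlne _ (by omega), m3, hlc]
    obtain ⟨-, -, heq⟩ := flip hL hK0 hOlow (by omega) (by omega) hflat hrise
    have hupd : Function.update glow c (glow c + 1) = g := by
      rw [hlc, hglow, Function.update_idem, ← j3, Function.update_eq_self]
    rw [hupd] at heq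
    have hycell : ((glow c, glow c - c) : Cell) = y := by
      rw [hlc]
      exact Prod.ext rfl (by show y.1 - c = y.2; omega)
    rw [hycell] at heq
    exact ⟨glow, hOlow, by rw [hE, ← heq]⟩

lemma rise_aux {g : ℤ → ℤ} : ∀ n : ℕ, ∀ a : ℤ,
    (∀ c : ℤ, a < c → c ≤ a + n → g c = g (c - 1) + 1) → g (a + n) = g a + n := by
  intro n
  induction n with
  | zero => intro a _; simp
  | succ n ihn =>
    intro a h
    have h1 : g (a + n) = g a + n := ihn a (fun c hc1 hc2 => h c hc1 (by push_cast at hc2 ⊢; omega))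
    have h2 := h (a + n + 1) (by push_cast; omega) (by push_cast; omega)
    rw [show a + n + 1 - 1 = a + (n:ℤ) by ring] at h2
    rw [show a + ((n:ℕ):ℤ) + 1 = a + ((n+1:ℕ):ℤ) by push_cast; ring] at h2
    push_cast at h1 h2 ⊢
    omega

lemma hle_g0 (hL : 1 ≤ L) {g : ℤ → ℤ} (hO : Ok (-L) (M - K - 1) 1 M g) {c : ℤ}
    (h1 : -L ≤ c) (h2 : c ≤ M - K - 1) : g c ≤ g0 L M c := by
  obtain ⟨b1, b2, b3, b4⟩ := bounds hO h1 h2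
  simp only [g0]
  omega

lemma reach (hL : 1 ≤ L) (hM : 1 ≤ M) (hK0 : 0 ≤ K) (hKL : K ≤ L) {g : ℤ → ℤ}
    (hO : Ok (-L) (M - K - 1) 1 M g) :
    Relation.ReflTransGen (exciteStep (lam L M))
      (youngDiag M (fun a => if a = M then K else L)) (lam L M \ cells (-L) (M - K - 1) g) := by
  rw [nu_eq hL hM hK0 hKL]
  suffices h : ∀ N : ℕ, ∀ g : ℤ → ℤ, Ok (-L) (M - K - 1) 1 M g →
      (∑ c ∈ Finset.Icc (-L) (M - K - 1), (g0 L M c - g c)).toNat = N →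
      Relation.ReflTransGen (exciteStep (lam L M))
        (lam L M \ cells (-L) (M - K - 1) (g0 L M)) (lam L M \ cells (-L) (M - K - 1) g) by
    exact h _ g hO rfl
  intro N
  induction N using Nat.strong_induction_on with
  | _ N ih =>
    intro g hO hN
    by_cases hg : ∀ c, -L ≤ c → c ≤ M - K - 1 → g c = g0 L M c
    · have hcells : cells (-L) (M - K - 1) g = cells (-L) (M - K - 1) (g0 L M) := by
        ext x
        constructor
        · rintro ⟨h1, h2, h3⟩
          exact ⟨h1, h2, by rw [hg _ h1 h2] at h3; exact h3⟩
        · rintro ⟨h1, h2, h3⟩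
          exact ⟨h1, h2, by rw [hg _ h1 h2]; exact h3⟩
      rw [hcells]
    · push_neg at hg
      obtain ⟨c0, hc01, hc02, hc0⟩ := hg
      have hlt0 : g c0 < g0 L M c0 := lt_of_le_of_ne (hle_g0 hL hO hc01 hc02) hc0
      set F := (Finset.Icc (-L) (M - K - 1)).filter (fun c => g c < g0 L M c) with hF
      have hFne : F.Nonempty :=
        ⟨c0, Finset.mem_filter.mpr ⟨Finset.mem_Icc.mpr ⟨hc01, hc02⟩, hlt0⟩⟩
      set cs := F.max' hFne with hcs
      have hcsF := Finset.mem_filter.mp (F.max'_mem hFne)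
      have hcs1 : -L ≤ cs := (Finset.mem_Icc.mp hcsF.1).1
      have hcs2 : cs ≤ M - K - 1 := (Finset.mem_Icc.mp hcsF.1).2
      have hcslt : g cs < g0 L M cs := hcsF.2
      have hmax : ∀ c, -L ≤ c → c ≤ M - K - 1 → g c < g0 L M c → c ≤ cs := fun c j1 j2 j3 =>
        F.le_max' c (Finset.mem_filter.mpr ⟨Finset.mem_Icc.mpr ⟨j1, j2⟩, j3⟩)
      have hg0end : g0 L M (M - K - 1) = M := by simp only [g0]; omega
      have hcsd : cs < M - K - 1 := by
        rcases eq_or_lt_of_le hcs2 with h | h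
        · exfalso; rw [h, hg0end, hO.2.1] at hcslt; omega
        · exact h
      have hrisecs : g (cs + 1) = g cs + 1 := by
        have he : g (cs + 1) = g0 L M (cs + 1) := by
          by_contra hne
          have := hmax (cs + 1) (by omega) (by omega)
            (lt_of_le_of_ne (hle_g0 hL hO (by omega) (by omega)) hne)
          omega
        have hmono : g0 L M cs ≤ g0 L M (cs + 1) := by simp only [g0]; omega
        have hstep := hO.2.2 cs hcs1 hcsd
        omega
      set F2 := (Finset.Ioc (-L) cs).filter (fun c => g c = g (c - 1)) with hF2
      have hF2ne : F2.Nonempty := by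
        by_contra hemp
        rw [Finset.not_nonempty_iff_eq_empty] at hemp
        have hall : ∀ c : ℤ, -L < c → c ≤ cs → g c = g (c - 1) + 1 := by
          intro c j1 j2
          have hstep := hO.2.2 (c - 1) (by omega) (by omega)
          rw [show c - 1 + 1 = c by ring] at hstep
          rcases hstep with h | h
          · exfalso
            have : c ∈ F2 := Finset.mem_filter.mpr ⟨Finset.mem_Ioc.mpr ⟨j1, j2⟩, h⟩
            rw [hemp] at this
            exact absurd this (Finset.notMem_empty c)
          · omega
        have hgv := rise_aux (cs + L).toNat (-L) (fun c j1 j2 => hall c j1 (by omega))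
        rw [show -L + ((cs + L).toNat : ℤ) = cs by omega, hO.1] at hgv
        have : g0 L M cs ≤ cs + L + 1 := by simp only [g0]; omega
        omega
      set c' := F2.max' hF2ne with hc'
      have hc'F := Finset.mem_filter.mp (F2.max'_mem hF2ne)
      have hc'1 : -L < c' := (Finset.mem_Ioc.mp hc'F.1).1
      have hc'2 : c' ≤ cs := (Finset.mem_Ioc.mp hc'F.1).2
      have hflat : g (c' - 1) = g c' := hc'F.2.symm
      have hrisec' : g (c' + 1) = g c' + 1 := by
        rcases eq_or_lt_of_le hc'2 with h | h
        · rw [h]; exact hrisecs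
        · have hstep := hO.2.2 c' (by omega) (by omega)
          rcases hstep with hfl | hr
          · exfalso
            have hmem : c' + 1 ∈ F2 := Finset.mem_filter.mpr
              ⟨Finset.mem_Ioc.mpr ⟨by omega, by omega⟩, by rw [show c' + 1 - 1 = c' by ring]; exact hfl⟩
            have := F2.le_max' _ hmem
            omega
          · exact hr
      obtain ⟨hO', hact, heq⟩ := flip hL hK0 hO (by omega) (by omega : c' < M - K - 1) hflat hrisec'
      set g' := Function.update g c' (g c' + 1) with hg'
      -- measure decreases
      set S : ℤ := ∑ c ∈ Finset.Icc (-L) (M - K - 1), (g0 L M c - g c) with hS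
      have hterm : ∀ c ∈ Finset.Icc (-L) (M - K - 1), (0:ℤ) ≤ g0 L M c - g c := by
        intro c hcm
        rw [Finset.mem_Icc] at hcm
        have := hle_g0 hL hO hcm.1 hcm.2
        omega
      have hS1 : 1 ≤ S := by
        have h1 := Finset.single_le_sum hterm (Finset.mem_Icc.mpr ⟨hcs1, hcs2⟩)
        omega
      have hsum : ∑ c ∈ Finset.Icc (-L) (M - K - 1), (g0 L M c - g' c) = S - 1 := by
        have hcongr : ∀ c ∈ Finset.Icc (-L) (M - K - 1),
            g0 L M c - g' c = (g0 L M c - g c) - (if c = c' then 1 else 0) := by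
          intro c hcm
          by_cases h : c = c'
          · subst h
            rw [if_pos rfl, hg', Function.update_self]
            ring
          · rw [if_neg h, hg', Function.update_of_ne h]
            ring
        rw [Finset.sum_congr rfl hcongr, Finset.sum_sub_distrib]
        have : (∑ c ∈ Finset.Icc (-L) (M - K - 1), if c = c' then (1:ℤ) else 0) = 1 := by
          rw [Finset.sum_ite_eq' (Finset.Icc (-L) (M - K - 1)) c' (fun _ => (1:ℤ))]
          rw [if_pos (Finset.mem_Icc.mpr ⟨by omega, by omega⟩)]
        rw [this]
      have hN' : (∑ c ∈ Finset.Icc (-L) (M - K - 1), (g0 L M c - g' c)).toNat < N := by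
        rw [hsum]
        omega
      have hprev := ih _ hN' g' hO' rfl
      exact Relation.ReflTransGen.tail hprev ⟨_, hact, heq⟩

end Rect
end EDPC

/-- **Proposition 7.4 (1)**: for `λ = ((ℓ+1)^m)` and `ν^{(k)} = (ℓ^{m−1},k)` with
`0 ≤ k ≤ ℓ`, the map `p ↦ λ ∖ p` is a bijection from the lattice paths
`L((1,ℓ+1),(m,k+1))` onto the excited diagrams `E_λ(ν^{(k)})`; moreover every such
lattice path is contained in the Young diagram `λ`. -/
theorem excited_diagrams_are_path_complements (l m k : ℕ) (hl : 1 ≤ l) (hm : 1 ≤ m)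
    (hk : k ≤ l) :
    (∀ p ∈ LPath ((1 : ℤ), (l : ℤ) + 1) ((m : ℤ), (k : ℤ) + 1),
      p ⊆ youngDiag m (fun _ => (l : ℤ) + 1)) ∧
    Set.BijOn (fun p => youngDiag m (fun _ => (l : ℤ) + 1) \ p)
      (LPath ((1 : ℤ), (l : ℤ) + 1) ((m : ℤ), (k : ℤ) + 1))
      (ExcitedSet (youngDiag m (fun _ => (l : ℤ) + 1))
        (youngDiag m (fun a => if a = (m : ℤ) then (k : ℤ) else (l : ℤ)))) := by
  have hL' : (1:ℤ) ≤ (l:ℤ) := by exact_mod_cast hl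
  have hM' : (1:ℤ) ≤ (m:ℤ) := by exact_mod_cast hm
  have hK0' : (0:ℤ) ≤ (k:ℤ) := Int.natCast_nonneg k
  have hKL' : (k:ℤ) ≤ (l:ℤ) := by exact_mod_cast hk
  have hchar : ∀ p ∈ LPath ((1 : ℤ), (l : ℤ) + 1) ((m : ℤ), (k : ℤ) + 1),
      ∃ g, EDPC.Ok (-(l:ℤ)) ((m:ℤ) - (k:ℤ) - 1) 1 (m:ℤ) g ∧
        p = EDPC.cells (-(l:ℤ)) ((m:ℤ) - (k:ℤ) - 1) g := by
    rintro p ⟨lst, ⟨hh, hl2, hch⟩, rfl⟩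
    obtain ⟨hle, g, hOk, hset⟩ := EDPC.forward lst hch _ _ hh hl2
    have e0 : ((1 : ℤ), (l : ℤ) + 1).1 - ((1 : ℤ), (l : ℤ) + 1).2 = -(l:ℤ) := by
      show (1:ℤ) - ((l:ℤ) + 1) = -(l:ℤ); ring
    have e1 : (((m:ℤ)), (k : ℤ) + 1).1 - (((m:ℤ)), (k : ℤ) + 1).2 = (m:ℤ) - (k:ℤ) - 1 := by
      show ((m:ℤ)) - ((k:ℤ) + 1) = (m:ℤ) - (k:ℤ) - 1; ring
    rw [e0, e1] at hOk hset
    exact ⟨g, hOk, hset⟩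
  constructor
  · intro p hp
    obtain ⟨g, hOk, rfl⟩ := hchar p hp
    exact EDPC.cells_subset hL' hK0' hOk
  · refine ⟨?_, ?_, ?_⟩
    · intro p hp
      obtain ⟨g, hOk, rfl⟩ := hchar p hp
      exact EDPC.reach hL' hM' hK0' hKL' hOk
    · intro p1 h1 p2 h2 he
      simp only at he
      have s1 : p1 ⊆ youngDiag m (fun _ => (l : ℤ) + 1) := by
        obtain ⟨g, hOk, rfl⟩ := hchar p1 h1
        exact EDPC.cells_subset hL' hK0' hOk
      have s2 : p2 ⊆ youngDiag m (fun _ => (l : ℤ) + 1) := by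
        obtain ⟨g, hOk, rfl⟩ := hchar p2 h2
        exact EDPC.cells_subset hL' hK0' hOk
      calc p1 = youngDiag m (fun _ => (l : ℤ) + 1) \
                (youngDiag m (fun _ => (l : ℤ) + 1) \ p1) := (Set.diff_diff_cancel_left s1).symm
        _ = youngDiag m (fun _ => (l : ℤ) + 1) \
                (youngDiag m (fun _ => (l : ℤ) + 1) \ p2) := by rw [he]
        _ = p2 := Set.diff_diff_cancel_left s2
    · intro D hD
      obtain ⟨g, hOk, rfl⟩ := EDPC.exc_char hL' hM' hK0' hKL' hD
      refine ⟨EDPC.cells (-(l:ℤ)) ((m:ℤ) - (k:ℤ) - 1) g, ?_, rfl⟩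
      have hb := EDPC.backward hOk (by omega)
      have e0 : (((1:ℤ)), (1:ℤ) - -(l:ℤ)) = ((1 : ℤ), (l : ℤ) + 1) := by
        refine Prod.ext rfl ?_; show (1:ℤ) - -(l:ℤ) = (l:ℤ) + 1; ring
      have e1 : (((m:ℤ)), (m:ℤ) - ((m:ℤ) - (k:ℤ) - 1)) = (((m:ℤ)), (k : ℤ) + 1) := by
        refine Prod.ext rfl ?_; show (m:ℤ) - ((m:ℤ) - (k:ℤ) - 1) = (k:ℤ) + 1; ring
      rw [e0, e1] at hb
      exact hb
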